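/- arXiv:2003.02826 — 8 statements merged into one kernel-verified Lean document; each statement's English description precedes it below -/
import Mathlib

section
/- For all real ρ with ρ_min ≤ ρ ≤ ρ_max, where 0 < ρ_min ≤ ρ* ≤ ρ_max, the inequality (ρ - ρ*)²/(2 ρ_max) ≤ ρ·ln(ρ/ρ*) + ρ* - ρ ≤ (ρ - ρ*)²/(2 ρ_min) holds. -/
open Real Set

lemma mono1 : MonotoneOn (fun t : ℝ => Real.log t - (t-1) + (t-1)^2/2) (Set.Ioi 0) := by
  apply monotoneOn_of_deriv_nonneg (convex_Ioi 0)
  · apply ContinuousOn.add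
    · exact (Real.continuousOn_log.mono (by intro x hx; simp at hx ⊢; linarith)).sub
        (by fun_prop)
    · fun_prop
  · rw [isOpen_Ioi.interior_eq]
    intro x hx
    have hx' : x ≠ 0 := ne_of_gt hx
    exact (((Real.differentiableAt_log hx').sub (by fun_prop)).add (by fun_prop)).differentiableWithinAt
  · rw [isOpen_Ioi.interior_eq]
    intro x hx
    have hx0 : (0:ℝ) < x := hx
    have hd : HasDerivAt (fun t : ℝ => Real.log t - (t-1) + (t-1)^2/2)
        (1/x - 1 + (x-1)) x := by
      have h1 := Real.hasDerivAt_log (ne_of_gt hx0)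
      have h2 : HasDerivAt (fun t : ℝ => t - 1) 1 x := (hasDerivAt_id x).sub_const 1
      have h3 : HasDerivAt (fun t : ℝ => (t-1)^2/2) (x-1) x := by
        have := (h2.pow 2).div_const 2
        simpa [mul_comm] using this
      have := (h1.fun_sub h2).fun_add h3
      simpa [one_div] using this
    rw [hd.deriv]
    have : 1/x - 1 + (x-1) = (x-1)^2/x := by field_simp; ring
    rw [this]; positivity

lemma mono2 : MonotoneOn (fun t : ℝ => (t - 1/t)/2 - Real.log t) (Set.Ioi 0) := by
  apply monotoneOn_of_deriv_nonneg (convex_Ioi 0)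
  · apply ContinuousOn.sub
    · apply ContinuousOn.div_const
      exact continuousOn_id.sub (continuousOn_const.div continuousOn_id
        (by intro x hx; exact ne_of_gt hx))
    · exact Real.continuousOn_log.mono (by intro x hx; simp at hx ⊢; linarith)
  · rw [isOpen_Ioi.interior_eq]
    intro x hx
    have hx' : x ≠ 0 := ne_of_gt (show (0:ℝ) < x from hx)
    exact ((((differentiable_id.differentiableAt).sub
      ((differentiableAt_const 1).div differentiableAt_id hx')).div_const 2).sub
      (Real.differentiableAt_log hx')).differentiableWithinAt
  · rw [isOpen_Ioi.interior_eq]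
    intro x hx
    have hx0 : (0:ℝ) < x := hx
    have hx' : x ≠ 0 := ne_of_gt hx0
    have hd : HasDerivAt (fun t : ℝ => (t - 1/t)/2 - Real.log t)
        ((1 - (-(1/x^2)))/2 - 1/x) x := by
      have hinv : HasDerivAt (fun t : ℝ => 1/t) (-(1/x^2)) x := by
        simpa [one_div] using (hasDerivAt_inv hx')
      have h2 : HasDerivAt (fun t : ℝ => (t - 1/t)/2) ((1 - (-(1/x^2)))/2) x :=
        ((hasDerivAt_id x).sub hinv).div_const 2
      have := h2.fun_sub (Real.hasDerivAt_log hx')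
      simpa [one_div] using this
    rw [hd.deriv]
    have : (1 - (-(1/x^2)))/2 - 1/x = (x-1)^2/(2*x^2) := by field_simp; ring
    rw [this]; positivity

-- A : for 1 ≤ t : (t-1) - (t-1)^2/2 ≤ log t
lemma lemA {t : ℝ} (ht : 1 ≤ t) : (t-1) - (t-1)^2/2 ≤ Real.log t := by
  have := mono1 (mem_Ioi.2 one_pos) (mem_Ioi.2 (lt_of_lt_of_le one_pos ht)) ht
  simp at this
  linarith

-- B : for 0 < t ≤ 1 : log t ≤ (t-1) - (t-1)^2/2
lemma lemB {t : ℝ} (h0 : 0 < t) (ht : t ≤ 1) : Real.log t ≤ (t-1) - (t-1)^2/2 := by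
  have := mono1 (mem_Ioi.2 h0) (mem_Ioi.2 one_pos) ht
  simp at this
  linarith

-- C : for 0 < t ≤ 1 : (t - 1/t)/2 ≤ log t
lemma lemC {t : ℝ} (h0 : 0 < t) (ht : t ≤ 1) : (t - 1/t)/2 ≤ Real.log t := by
  have := mono2 (mem_Ioi.2 h0) (mem_Ioi.2 one_pos) ht
  simp at this
  rw [one_div]
  linarith

-- D : for 1 ≤ t : log t ≤ (t - 1/t)/2
lemma lemD {t : ℝ} (ht : 1 ≤ t) : Real.log t ≤ (t - 1/t)/2 := by
  have := mono2 (mem_Ioi.2 one_pos) (mem_Ioi.2 (lt_of_lt_of_le one_pos ht)) ht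
  simp at this
  rw [one_div]
  linarith

/-- Pointwise entropy–quadratic comparison. -/
theorem entropy_quadratic_bounds (ρmin ρmax ρstar ρ : ℝ)
    (h1 : 0 < ρmin) (h2 : ρmin ≤ ρstar) (h3 : ρstar ≤ ρmax)
    (h4 : ρmin ≤ ρ) (h5 : ρ ≤ ρmax) :
    (ρ - ρstar) ^ 2 / (2 * ρmax) ≤ ρ * Real.log (ρ / ρstar) + ρstar - ρ ∧
      ρ * Real.log (ρ / ρstar) + ρstar - ρ ≤ (ρ - ρstar) ^ 2 / (2 * ρmin) := by
  have hx : 0 < ρ := lt_of_lt_of_le h1 h4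
  have hy : 0 < ρstar := lt_of_lt_of_le h1 h2
  have hM : 0 < ρmax := lt_of_lt_of_le h1 (le_trans h2 h3)
  rcases le_total ρstar ρ with hc | hc
  · -- ρ ≥ ρstar
    have hv : 1 ≤ ρ / ρstar := (one_le_div hy).2 hc
    constructor
    · -- lower: (x-y)²/(2M) ≤ f ; via f ≥ (x-y)²/(2x) using B at u = y/x
      have hu : ρstar / ρ ≤ 1 := (div_le_one hx).2 hc
      have hB := lemB (div_pos hy hx) hu
      have hlog : Real.log (ρ / ρstar) = - Real.log (ρstar / ρ) := by
        rw [← Real.log_inv]; congr 1; field_simp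
      have key : (ρ - ρstar)^2 / (2*ρ) ≤ ρ * Real.log (ρ / ρstar) + ρstar - ρ := by
        rw [hlog, div_le_iff₀ (by positivity)]
        have h' : ρ * Real.log (ρstar / ρ) ≤ ρ * ((ρstar/ρ - 1) - (ρstar/ρ - 1)^2/2) :=
          mul_le_mul_of_nonneg_left hB (le_of_lt hx)
        have hexp : ρ * ((ρstar/ρ - 1) - (ρstar/ρ - 1)^2/2)
            = (ρstar - ρ) - (ρstar - ρ)^2/(2*ρ) := by field_simp
        rw [hexp] at h'
        have h2ρ : (ρstar - ρ)^2/(2*ρ) * (2*ρ) = (ρstar - ρ)^2 := by field_simp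
        nlinarith [h', sq_nonneg (ρ - ρstar)]
      calc (ρ - ρstar)^2 / (2*ρmax) ≤ (ρ - ρstar)^2 / (2*ρ) := by
            apply div_le_div_of_nonneg_left (by positivity) (by positivity) (by linarith)
        _ ≤ _ := key
    · -- upper: f ≤ (x-y)²/(2y) ≤ (x-y)²/(2m) using D at v = x/y
      have hD := lemD hv
      have key : ρ * Real.log (ρ / ρstar) + ρstar - ρ ≤ (ρ - ρstar)^2 / (2*ρstar) := by
        rw [le_div_iff₀ (by positivity)]
        have h' : ρ * Real.log (ρ/ρstar) ≤ ρ * ((ρ/ρstar - 1/(ρ/ρstar))/2) :=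
          mul_le_mul_of_nonneg_left hD (le_of_lt hx)
        have hexp : ρ * ((ρ/ρstar - 1/(ρ/ρstar))/2) = (ρ^2/ρstar - ρstar)/2 := by
          field_simp
        rw [hexp] at h'
        have : (ρ^2/ρstar) * (2*ρstar) = 2*ρ^2 := by field_simp
        nlinarith [h']
      calc ρ * Real.log (ρ / ρstar) + ρstar - ρ ≤ (ρ - ρstar)^2 / (2*ρstar) := key
        _ ≤ (ρ - ρstar)^2 / (2*ρmin) := by
            apply div_le_div_of_nonneg_left (by positivity) (by positivity) (by linarith)
  · -- ρ ≤ ρstar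
    have hw : ρ / ρstar ≤ 1 := (div_le_one hy).2 hc
    constructor
    · -- lower: via f ≥ (x-y)²/(2y), lemma C at w = x/y
      have hC := lemC (div_pos hx hy) hw
      have key : (ρ - ρstar)^2 / (2*ρstar) ≤ ρ * Real.log (ρ / ρstar) + ρstar - ρ := by
        rw [div_le_iff₀ (by positivity)]
        have h' : ρ * ((ρ/ρstar - 1/(ρ/ρstar))/2) ≤ ρ * Real.log (ρ/ρstar) := by
          rcases eq_or_lt_of_le (le_of_lt hx) with h | h
          · exact mul_le_mul_of_nonneg_left hC (le_of_lt hx)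
          · exact mul_le_mul_of_nonneg_left hC (le_of_lt hx)
        have hexp : ρ * ((ρ/ρstar - 1/(ρ/ρstar))/2) = (ρ^2/ρstar - ρstar)/2 := by
          field_simp
        rw [hexp] at h'
        have : (ρ^2/ρstar) * (2*ρstar) = 2*ρ^2 := by field_simp
        nlinarith [h']
      calc (ρ - ρstar)^2 / (2*ρmax) ≤ (ρ - ρstar)^2 / (2*ρstar) := by
            apply div_le_div_of_nonneg_left (by positivity) (by positivity) (by linarith)
        _ ≤ _ := key
    · -- upper: via f ≤ (x-y)²/(2x), lemma A at v = y/x ≥ 1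
      have hv : 1 ≤ ρstar / ρ := (one_le_div hx).2 hc
      have hA := lemA hv
      have hlog : Real.log (ρ / ρstar) = - Real.log (ρstar / ρ) := by
        rw [← Real.log_inv]; congr 1; field_simp
      have key : ρ * Real.log (ρ / ρstar) + ρstar - ρ ≤ (ρ - ρstar)^2 / (2*ρ) := by
        rw [hlog, le_div_iff₀ (by positivity)]
        have h' : ρ * ((ρstar/ρ - 1) - (ρstar/ρ - 1)^2/2) ≤ ρ * Real.log (ρstar/ρ) :=
          mul_le_mul_of_nonneg_left hA (le_of_lt hx)
        have hexp : ρ * ((ρstar/ρ - 1) - (ρstar/ρ - 1)^2/2)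
            = (ρstar - ρ) - (ρstar - ρ)^2/(2*ρ) := by field_simp
        rw [hexp] at h'
        have h2ρ : (ρstar - ρ)^2/(2*ρ) * (2*ρ) = (ρstar - ρ)^2 := by field_simp
        nlinarith [h']
      calc ρ * Real.log (ρ / ρstar) + ρstar - ρ ≤ (ρ - ρstar)^2 / (2*ρ) := key
        _ ≤ (ρ - ρstar)^2 / (2*ρmin) := by
            apply div_le_div_of_nonneg_left (by positivity) (by positivity) (by linarith)
end

section
/- Let f : ℝ → ℝ be twice continuously differentiable with |f'(x)| ≤ M and |f''(x)| ≤ M for all x ≥ 0. Then for all x₁, x₂, z₁, z₂ ≥ 0: |f(x₂) - f(x₁) - f(z₂) + f(z₁)| ≤ M|x₂ - x₁ - z₂ + z₁| + M|x₂ - x₁|·|x₁ - z₁| + M|x₂ - x₁|·|z₂ - z₁| + M|x₂ - x₁|². -/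
/-- MVT: there is a point in the closed interval realizing the slope. -/
lemma mvt_uIcc (f : ℝ → ℝ) (hf : Differentiable ℝ f) (a b : ℝ) :
    ∃ c ∈ Set.uIcc a b, f b - f a = deriv f c * (b - a) := by
  rcases lt_trichotomy a b with h | h | h
  · obtain ⟨c, hc, hc'⟩ := exists_hasDerivAt_eq_slope f (deriv f) h
      hf.continuous.continuousOn (fun x _ => (hf x).hasDerivAt)
    refine ⟨c, ?_, ?_⟩
    · rw [Set.uIcc_of_le h.le]; exact Set.mem_Icc_of_Ioo hc
    · rw [hc', div_mul_cancel₀ _ (sub_ne_zero.mpr h.ne')]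
  · exact ⟨a, Set.left_mem_uIcc, by rw [h]; ring⟩
  · obtain ⟨c, hc, hc'⟩ := exists_hasDerivAt_eq_slope f (deriv f) h
      hf.continuous.continuousOn (fun x _ => (hf x).hasDerivAt)
    refine ⟨c, ?_, ?_⟩
    · rw [Set.uIcc_comm, Set.uIcc_of_le h.le]; exact Set.mem_Icc_of_Ioo hc
    · have : f a - f b = deriv f c * (a - b) := by
        rw [hc', div_mul_cancel₀ _ (sub_ne_zero.mpr h.ne')]
      linarith [this]

/-- Second-difference estimate for a C² function with bounded derivatives on `[0,∞)`. -/
theorem second_difference_estimate (M : ℝ) (hM : 0 ≤ M) (f : ℝ → ℝ)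
    (hf : ContDiff ℝ 2 f)
    (hf1 : ∀ x, 0 ≤ x → |deriv f x| ≤ M)
    (hf2 : ∀ x, 0 ≤ x → |deriv (deriv f) x| ≤ M)
    (x1 x2 z1 z2 : ℝ) (hx1 : 0 ≤ x1) (hx2 : 0 ≤ x2) (hz1 : 0 ≤ z1) (hz2 : 0 ≤ z2) :
    |f x2 - f x1 - f z2 + f z1| ≤
      M * |x2 - x1 - z2 + z1| + M * |x2 - x1| * |x1 - z1|
        + M * |x2 - x1| * |z2 - z1| + M * |x2 - x1| ^ 2 := by
  have hfd : Differentiable ℝ f := hf.differentiable (by norm_num)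
  have hf' : ContDiff ℝ 1 (deriv f) := (contDiff_succ_iff_deriv.mp
    (by norm_num at hf ⊢; exact hf : ContDiff ℝ (1 + 1) f)).2.2
  have hfd' : Differentiable ℝ (deriv f) := hf'.differentiable one_ne_zero
  -- Lipschitz bound for deriv f on [0,∞)
  have lip : ∀ a b : ℝ, 0 ≤ a → 0 ≤ b → |deriv f b - deriv f a| ≤ M * |b - a| := by
    intro a b ha hb
    have := (convex_Ici (0:ℝ)).norm_image_sub_le_of_norm_hasDerivWithin_le
      (f := deriv f) (f' := deriv (deriv f))
      (fun x hx => ((hfd' x).hasDerivAt).hasDerivWithinAt)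
      (fun x hx => by simpa [Real.norm_eq_abs] using hf2 x hx) ha hb
    simpa [Real.norm_eq_abs] using this
  obtain ⟨c, hc, hcs⟩ := mvt_uIcc f hfd x1 x2
  obtain ⟨d, hd, hds⟩ := mvt_uIcc f hfd z1 z2
  have hc0 : 0 ≤ c := le_trans (le_min hx1 hx2) hc.1
  have hd0 : 0 ≤ d := le_trans (le_min hz1 hz2) hd.1
  have hcx : |c - x1| ≤ |x2 - x1| := by
    rcases le_total x1 x2 with h | h
    · rw [Set.uIcc_of_le h] at hc
      rw [abs_of_nonneg (by linarith [hc.1]), abs_of_nonneg (by linarith)]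
      linarith [hc.2]
    · rw [Set.uIcc_of_ge h] at hc
      rw [abs_of_nonpos (by linarith [hc.2]), abs_of_nonpos (by linarith)]
      linarith [hc.1]
  have hdz : |d - z1| ≤ |z2 - z1| := by
    rcases le_total z1 z2 with h | h
    · rw [Set.uIcc_of_le h] at hd
      rw [abs_of_nonneg (by linarith [hd.1]), abs_of_nonneg (by linarith)]
      linarith [hd.2]
    · rw [Set.uIcc_of_ge h] at hd
      rw [abs_of_nonpos (by linarith [hd.2]), abs_of_nonpos (by linarith)]
      linarith [hd.1]
  have hcd : |c - d| ≤ |x2 - x1| + |x1 - z1| + |z2 - z1| := by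
    calc |c - d| = |(c - x1) + (x1 - z1) + (z1 - d)| := by ring_nf
      _ ≤ |c - x1| + |x1 - z1| + |z1 - d| := by
          exact (abs_add_le _ _).trans (by gcongr; exact abs_add_le _ _)
      _ ≤ |x2 - x1| + |x1 - z1| + |z2 - z1| := by
          have : |z1 - d| = |d - z1| := abs_sub_comm _ _
          rw [this]; gcongr
  have key : f x2 - f x1 - f z2 + f z1
      = deriv f d * (x2 - x1 - z2 + z1) + (deriv f c - deriv f d) * (x2 - x1) := by
    rw [show f x2 - f x1 - f z2 + f z1 = (f x2 - f x1) - (f z2 - f z1) by ring, hcs, hds]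
    ring
  rw [key]
  have h1 : |deriv f d * (x2 - x1 - z2 + z1)| ≤ M * |x2 - x1 - z2 + z1| := by
    rw [abs_mul]; gcongr; exact hf1 d hd0
  have h2 : |(deriv f c - deriv f d) * (x2 - x1)|
      ≤ M * (|x2 - x1| + |x1 - z1| + |z2 - z1|) * |x2 - x1| := by
    rw [abs_mul]
    gcongr
    exact (lip d c hd0 hc0).trans (by gcongr)
  calc |deriv f d * (x2 - x1 - z2 + z1) + (deriv f c - deriv f d) * (x2 - x1)|
      ≤ |deriv f d * (x2 - x1 - z2 + z1)| + |(deriv f c - deriv f d) * (x2 - x1)| :=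
        abs_add_le _ _
    _ ≤ M * |x2 - x1 - z2 + z1| + M * (|x2 - x1| + |x1 - z1| + |z2 - z1|) * |x2 - x1| := by
        gcongr
    _ = M * |x2 - x1 - z2 + z1| + M * |x2 - x1| * |x1 - z1|
        + M * |x2 - x1| * |z2 - z1| + M * |x2 - x1| ^ 2 := by ring
end

section
/- Let f : ℝ → ℝ be three times continuously differentiable with |f'(x)| ≤ M, |f''(x)| ≤ M, |f'''(x)| ≤ M for all x ∈ [a, b], where a ≤ b. Then for all x₁, x₂, x₃, x₄ ∈ [a, b]: |3f(x₂) - 3f(x₃) + f(x₄) - f(x₁)| ≤ M|3x₂ + x₄ - 3x₃ - x₁| + (7/6)M(b-a)³ + 3M(b-a)|2x₃ - x₂ - x₄| + M|2x₂ - x₁ - x₃|² + M|2x₃ - x₂ - x₄|². -/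
open Set

private lemma idw_eq {n : ℕ} {f : ℝ → ℝ} (hf : ContDiff ℝ n f) {s : Set ℝ}
    (hs : UniqueDiffOn ℝ s) {x : ℝ} (hx : x ∈ s) :
    iteratedDerivWithin n f s x = iteratedDeriv n f x := by
  rw [iteratedDerivWithin_eq_iteratedFDerivWithin, iteratedDeriv_eq_iteratedFDeriv]
  congr 1
  have hfe : ContDiff ℝ (n : ℕ∞) f := by exact_mod_cast hf
  have ht := contDiff_iff_ftaylorSeries.mp hfe
  have h1 := (ht.hasFTaylorSeriesUpToOn s).eq_iteratedFDerivWithin_of_uniqueDiffOn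
    (by exact_mod_cast le_refl (n : ℕ∞)) hs hx
  have h2 := ht.eq_iteratedFDeriv (by exact_mod_cast le_refl (n : ℕ∞)) x
  rw [← h1, h2]

private lemma hd2 {f : ℝ → ℝ} : iteratedDeriv 2 f = deriv (deriv f) := by
  rw [show (2 : ℕ) = 1 + 1 from rfl, iteratedDeriv_succ, iteratedDeriv_one]

private lemma hd3 {f : ℝ → ℝ} : iteratedDeriv 3 f = deriv (deriv (deriv f)) := by
  rw [show (3 : ℕ) = 2 + 1 from rfl, iteratedDeriv_succ, hd2]

private lemma taylor3_right (M : ℝ) {f : ℝ → ℝ} (hf : ContDiff ℝ 3 f) {a b x₀ x : ℝ}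
    (hx₀ : x₀ ∈ Icc a b) (hx : x ∈ Icc a b)
    (h3 : ∀ y ∈ Icc a b, |deriv (deriv (deriv f)) y| ≤ M) (hlt : x₀ < x) :
    |f x - f x₀ - deriv f x₀ * (x - x₀) - deriv (deriv f) x₀ * (x - x₀) ^ 2 / 2| ≤
      M / 6 * |x - x₀| ^ 3 := by
  have hsub : Icc x₀ x ⊆ Icc a b := Icc_subset_Icc hx₀.1 hx.2
  have hu : UniqueDiffOn ℝ (Icc x₀ x) := uniqueDiffOn_Icc hlt
  have hdd : Differentiable ℝ (deriv (deriv f)) := by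
    have h1 : ContDiff ℝ (2 : ℕ) (deriv f) := by
      have := (contDiff_succ_iff_deriv (n := 2)).mp (by exact_mod_cast hf)
      exact_mod_cast this.2.2
    have h2 : ContDiff ℝ (1 : ℕ) (deriv (deriv f)) := by
      have := (contDiff_succ_iff_deriv (n := 1)).mp (by exact_mod_cast h1)
      exact_mod_cast this.2.2
    exact h2.differentiable (by norm_num)
  have hf' : DifferentiableOn ℝ (iteratedDerivWithin 2 f (Icc x₀ x)) (Ioo x₀ x) := by
    refine (hdd.differentiableOn).congr fun y hy => ?_
    rw [idw_eq (hf.of_le (by norm_num)) hu (Ioo_subset_Icc_self hy), hd2]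
  obtain ⟨x', hx', hEq⟩ :=
    by
      have := taylor_mean_remainder_lagrange (n := 2) (f := f) hlt.ne
        (by rw [uIcc_of_le hlt.le]; exact (hf.of_le (by norm_num)).contDiffOn)
        (by rw [uIcc_of_le hlt.le, uIoo_of_le hlt.le]; exact hf')
      rw [uIcc_of_le hlt.le, uIoo_of_le hlt.le] at this
      exact this
  have hT : taylorWithinEval f 2 (Icc x₀ x) x₀ x =
      f x₀ + deriv f x₀ * (x - x₀) + deriv (deriv f) x₀ * (x - x₀) ^ 2 / 2 := by
    have hm : x₀ ∈ Icc x₀ x := left_mem_Icc.2 hlt.le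
    rw [taylor_within_apply]
    rw [Finset.sum_range_succ, Finset.sum_range_succ, Finset.sum_range_succ,
      Finset.sum_range_zero]
    rw [idw_eq (hf.of_le (by norm_num)) hu hm, idw_eq (hf.of_le (by norm_num)) hu hm,
      idw_eq (hf.of_le (by norm_num)) hu hm]
    simp [iteratedDeriv_one, hd2, Nat.factorial]
    ring
  rw [idw_eq hf hu (Ioo_subset_Icc_self hx')] at hEq
  have key : f x - f x₀ - deriv f x₀ * (x - x₀) - deriv (deriv f) x₀ * (x - x₀) ^ 2 / 2 =
      deriv (deriv (deriv f)) x' * (x - x₀) ^ 3 / 6 := by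
    have := hEq
    rw [hT, hd3] at this
    norm_num [Nat.factorial] at this ⊢
    linarith
  rw [key]
  have hx'ab : x' ∈ Icc a b := hsub (Ioo_subset_Icc_self hx')
  have h3' := h3 x' hx'ab
  calc |deriv (deriv (deriv f)) x' * (x - x₀) ^ 3 / 6|
      = |deriv (deriv (deriv f)) x'| * |x - x₀| ^ 3 / 6 := by
        rw [abs_div, abs_mul, abs_pow]; norm_num
    _ ≤ M * |x - x₀| ^ 3 / 6 := by
        gcongr
    _ = M / 6 * |x - x₀| ^ 3 := by ring

private lemma taylor3 (M : ℝ) {f : ℝ → ℝ} (hf : ContDiff ℝ 3 f) {a b x₀ x : ℝ}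
    (hx₀ : x₀ ∈ Icc a b) (hx : x ∈ Icc a b)
    (h3 : ∀ y ∈ Icc a b, |deriv (deriv (deriv f)) y| ≤ M) :
    |f x - f x₀ - deriv f x₀ * (x - x₀) - deriv (deriv f) x₀ * (x - x₀) ^ 2 / 2| ≤
      M / 6 * |x - x₀| ^ 3 := by
  rcases lt_trichotomy x₀ x with hlt | heq | hgt
  · exact taylor3_right M hf hx₀ hx h3 hlt
  · subst heq; simp
  · -- reflect: g t = f (-t)
    set g : ℝ → ℝ := fun t => f (-t) with hg
    have hgc : ContDiff ℝ 3 g := hf.comp contDiff_neg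
    have hg1 : deriv g = fun t => -deriv f (-t) := by
      funext t; rw [hg]; exact deriv_comp_neg f t
    have hg2 : deriv (deriv g) = fun t => deriv (deriv f) (-t) := by
      funext t
      rw [hg1, deriv.fun_neg, deriv_comp_neg (deriv f) t]
      ring
    have hg3 : ∀ y ∈ Icc (-b) (-a), |deriv (deriv (deriv g)) y| ≤ M := by
      intro y hy
      have hgy : deriv (deriv (deriv g)) y = -deriv (deriv (deriv f)) (-y) := by
        rw [hg2]; exact deriv_comp_neg (deriv (deriv f)) y
      rw [hgy, abs_neg]
      exact h3 (-y) ⟨by linarith [hy.2], by linarith [hy.1]⟩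
    have hmem₀ : -x₀ ∈ Icc (-b) (-a) := ⟨by linarith [hx₀.2], by linarith [hx₀.1]⟩
    have hmemx : -x ∈ Icc (-b) (-a) := ⟨by linarith [hx.2], by linarith [hx.1]⟩
    have hlt' : -x₀ < -x := by linarith
    have hb := taylor3_right M hgc hmem₀ hmemx hg3 hlt'
    have e1 : g (-x) = f x := by rw [hg]; simp
    have e2 : g (-x₀) = f x₀ := by rw [hg]; simp
    have e3 : deriv g (-x₀) = -deriv f x₀ := by rw [hg1]; simp
    have e4 : deriv (deriv g) (-x₀) = deriv (deriv f) x₀ := by rw [hg2]; simp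
    have harg : g (-x) - g (-x₀) - deriv g (-x₀) * (-x - -x₀) -
        deriv (deriv g) (-x₀) * (-x - -x₀) ^ 2 / 2 =
        f x - f x₀ - deriv f x₀ * (x - x₀) - deriv (deriv f) x₀ * (x - x₀) ^ 2 / 2 := by
      rw [e1, e2, e3, e4]; ring
    have hrhs : M / 6 * |(-x) - (-x₀)| ^ 3 = M / 6 * |x - x₀| ^ 3 := by
      rw [show (-x) - (-x₀) = -(x - x₀) by ring, abs_neg]
    calc |f x - f x₀ - deriv f x₀ * (x - x₀) - deriv (deriv f) x₀ * (x - x₀) ^ 2 / 2|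
        = |g (-x) - g (-x₀) - deriv g (-x₀) * (-x - -x₀) -
            deriv (deriv g) (-x₀) * (-x - -x₀) ^ 2 / 2| := (congrArg abs harg).symm
      _ ≤ M / 6 * |(-x) - (-x₀)| ^ 3 := hb
      _ = M / 6 * |x - x₀| ^ 3 := hrhs

set_option maxHeartbeats 2000000 in
/-- Third-order finite difference bound for C³ functions. -/
theorem third_order_fd_bound (M : ℝ) (hM : 0 ≤ M) (f : ℝ → ℝ)
    (hf : ContDiff ℝ 3 f) (a b : ℝ) (hab : a ≤ b)
    (hf1 : ∀ x ∈ Set.Icc a b, |deriv f x| ≤ M)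
    (hf2 : ∀ x ∈ Set.Icc a b, |deriv (deriv f) x| ≤ M)
    (hf3 : ∀ x ∈ Set.Icc a b, |deriv (deriv (deriv f)) x| ≤ M)
    (x1 x2 x3 x4 : ℝ) (h1 : x1 ∈ Set.Icc a b) (h2 : x2 ∈ Set.Icc a b)
    (h3 : x3 ∈ Set.Icc a b) (h4 : x4 ∈ Set.Icc a b) :
    |3 * f x2 - 3 * f x3 + f x4 - f x1| ≤
      M * |3 * x2 + x4 - 3 * x3 - x1| + (7 / 6) * M * (b - a) ^ 3
        + 3 * M * (b - a) * |2 * x3 - x2 - x4|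
        + M * |2 * x2 - x1 - x3| ^ 2 + M * |2 * x3 - x2 - x4| ^ 2 := by
  obtain ⟨A, hA⟩ : ∃ A, A = deriv f x1 := ⟨_, rfl⟩
  obtain ⟨B, hB⟩ : ∃ B, B = deriv (deriv f) x1 := ⟨_, rfl⟩
  obtain ⟨R, hRdef⟩ : ∃ R : ℝ → ℝ, R = fun x => f x - f x1 - A * (x - x1) - B * (x - x1) ^ 2 / 2 :=
    ⟨_, rfl⟩
  have hdist : ∀ x ∈ Set.Icc a b, |x - x1| ≤ b - a := fun x hx =>
    abs_sub_le_iff.2 ⟨by linarith [hx.2, h1.1], by linarith [hx.1, h1.2]⟩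
  have hR : ∀ x ∈ Set.Icc a b, |R x| ≤ M / 6 * (b - a) ^ 3 := by
    intro x hx
    simp only [hRdef]
    have ht := taylor3 M hf h1 hx hf3
    rw [← hA, ← hB] at ht
    refine ht.trans ?_
    have hpow : |x - x1| ^ 3 ≤ (b - a) ^ 3 :=
      pow_le_pow_left₀ (abs_nonneg _) (hdist x hx) 3
    have hM6 : (0:ℝ) ≤ M / 6 := by linarith
    exact mul_le_mul_of_nonneg_left hpow hM6
  have hAM : |A| ≤ M := hA ▸ hf1 x1 h1
  have hBM : |B| ≤ M := hB ▸ hf2 x1 h1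
  obtain ⟨w, hw⟩ : ∃ w, 3 * x2 + x4 - 3 * x3 - x1 = w := ⟨_, rfl⟩
  obtain ⟨u, hu⟩ : ∃ u, 2 * x2 - x1 - x3 = u := ⟨_, rfl⟩
  obtain ⟨v, hv⟩ : ∃ v, 2 * x3 - x2 - x4 = v := ⟨_, rfl⟩
  obtain ⟨Q, hQ⟩ : ∃ Q, 3 * (x2 - x1) ^ 2 - 3 * (x3 - x1) ^ 2 + (x4 - x1) ^ 2 = Q := ⟨_, rfl⟩
  rw [hw, hu, hv, sq_abs, sq_abs]
  have key : 3 * f x2 - 3 * f x3 + f x4 - f x1 =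
      A * w + B / 2 * Q + (3 * R x2 - 3 * R x3 + R x4) := by
    simp only [hRdef]
    rw [← hw, ← hQ]
    ring
  have tri : |3 * f x2 - 3 * f x3 + f x4 - f x1| ≤
      |A| * |w| + |B| / 2 * |Q| + 3 * |R x2| + 3 * |R x3| + |R x4| := by
    rw [key]
    have t1 : |A * w + B / 2 * Q + (3 * R x2 - 3 * R x3 + R x4)| ≤
        |A * w| + |B / 2 * Q| + |3 * R x2 - 3 * R x3 + R x4| :=
      (abs_add_le _ _).trans (by linarith [abs_add_le (A * w) (B / 2 * Q)])
    have t2 : |3 * R x2 - 3 * R x3 + R x4| ≤ 3 * |R x2| + 3 * |R x3| + |R x4| := by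
      have a1 := abs_add_le (3 * R x2 - 3 * R x3) (R x4)
      have a2 := abs_sub (3 * R x2) (3 * R x3)
      have a3 : |3 * R x2| = 3 * |R x2| := by rw [abs_mul]; norm_num
      have a4 : |3 * R x3| = 3 * |R x3| := by rw [abs_mul]; norm_num
      linarith
    have t3 : |A * w| = |A| * |w| := abs_mul _ _
    have t4 : |B / 2 * Q| = |B| / 2 * |Q| := by rw [abs_mul, abs_div]; norm_num
    linarith
  -- bound the quadratic term
  have hQeq : Q = u ^ 2 + v ^ 2 - 6 * ((x3 - x2) * v) - 2 * (u * v) := by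
    rw [← hQ, ← hu, ← hv]; ring
  have hh : |x3 - x2| ≤ b - a :=
    abs_sub_le_iff.2 ⟨by linarith [h3.2, h2.1], by linarith [h3.1, h2.2]⟩
  have e1 : |(x3 - x2) * v| ≤ (b - a) * |v| := by
    rw [abs_mul]; exact mul_le_mul_of_nonneg_right hh (abs_nonneg v)
  have p1 := abs_le.mp e1
  have p2 := abs_le.mp (le_of_eq (abs_mul u v))
  have habsQ : |Q| ≤ u ^ 2 + v ^ 2 + 6 * ((b - a) * |v|) + 2 * (|u| * |v|) := by
    rw [hQeq, abs_le]
    constructor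
    · linarith [p1.2, p2.2, sq_nonneg u, sq_nonneg v, abs_nonneg v, abs_nonneg u,
        mul_nonneg (abs_nonneg u) (abs_nonneg v),
        mul_nonneg (sub_nonneg.2 hab) (abs_nonneg v)]
    · linarith [p1.1, p2.1]
  have hquad : |B| / 2 * |Q| ≤ M * u ^ 2 + M * v ^ 2 + 3 * M * (b - a) * |v| := by
    have hQn : (0:ℝ) ≤ |Q| := abs_nonneg _
    have s1 : |B| / 2 * |Q| ≤ M / 2 * |Q| := by
      apply mul_le_mul_of_nonneg_right _ hQn
      linarith
    have s2 : M / 2 * |Q| ≤ M / 2 * (u ^ 2 + v ^ 2 + 6 * ((b - a) * |v|) + 2 * (|u| * |v|)) :=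
      mul_le_mul_of_nonneg_left habsQ (by linarith)
    have huv : |u| * |v| ≤ (u ^ 2 + v ^ 2) / 2 := by
      nlinarith [sq_nonneg (|u| - |v|), sq_abs u, sq_abs v]
    have s3 : M * (|u| * |v|) ≤ M * ((u ^ 2 + v ^ 2) / 2) :=
      mul_le_mul_of_nonneg_left huv hM
    linarith [s1, s2, s3]
  -- bound remainders
  have r2 := hR x2 h2
  have r3 := hR x3 h3
  have r4 := hR x4 h4
  have hlin : |A| * |w| ≤ M * |w| :=
    mul_le_mul_of_nonneg_right hAM (abs_nonneg w)
  calc |3 * f x2 - 3 * f x3 + f x4 - f x1|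
      ≤ |A| * |w| + |B| / 2 * |Q| + 3 * |R x2| + 3 * |R x3| + |R x4| := tri
    _ ≤ M * |w| + (M * u ^ 2 + M * v ^ 2 + 3 * M * (b - a) * |v|)
        + 7 * (M / 6 * (b - a) ^ 3) := by linarith
    _ = M * |w| + (7 / 6) * M * (b - a) ^ 3 + 3 * M * (b - a) * |v|
        + M * u ^ 2 + M * v ^ 2 := by ring
end

section
/- Let ρ* > 0, b ∈ ℝ with |b| < ρ*, let f : ℝ → ℝ, let η = p/q with p, q positive integers, and let k be a positive integer. Define ρ(t,x) = ρ* + b sin(2kqπ(x - f(ρ*)t)) and v(t,x) = f(η^{-1} ∫_x^{x+η} ρ(t,s) ds). Then η^{-1} ∫_x^{x+η} ρ(t,s) ds = ρ* for all t ≥ 0, x ∈ ℝ, hence v(t,x) = f(ρ*) is constant, and ρ satisfies ∂ρ/∂t + ∂(ρv)/∂x = 0 and the periodicity ρ(t, x+1) = ρ(t, x) for all t ≥ 0, x ∈ ℝ. -/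
open intervalIntegral

/-- Traveling density waves for the non-local conservation law on a ring road. -/
theorem traveling_density_waves (ρstar b : ℝ) (hρstar : 0 < ρstar) (hb : |b| < ρstar)
    (f : ℝ → ℝ) (p q k : ℕ) (hp : 0 < p) (hq : 0 < q) (hk : 0 < k)
    (η : ℝ) (hη : η = (p : ℝ) / q) (hη1 : η ≤ 1)
    (ρ v : ℝ → ℝ → ℝ)
    (hρdef : ∀ t x : ℝ, ρ t x =
      ρstar + b * Real.sin (2 * k * q * Real.pi * (x - f ρstar * t)))
    (hvdef : ∀ t x : ℝ, v t x = f (η⁻¹ * ∫ s in x..(x + η), ρ t s)) :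
    (∀ t x : ℝ, 0 ≤ t → η⁻¹ * (∫ s in x..(x + η), ρ t s) = ρstar) ∧
    (∀ t x : ℝ, 0 ≤ t → v t x = f ρstar) ∧
    (∀ t x : ℝ, 0 ≤ t →
      deriv (fun τ => ρ τ x) t + deriv (fun y => ρ t y * v t y) x = 0) ∧
    (∀ t x : ℝ, 0 ≤ t → ρ t (x + 1) = ρ t x) := by
  have hπ := Real.pi_pos
  set A : ℝ := 2 * k * q * Real.pi with hA
  have hApos : 0 < A := by
    have hk' : (0:ℝ) < k := by exact_mod_cast hk
    have hq' : (0:ℝ) < q := by exact_mod_cast hq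
    positivity
  have hηpos : 0 < η := by
    rw [hη]
    have hp' : (0:ℝ) < p := by exact_mod_cast hp
    have hq' : (0:ℝ) < q := by exact_mod_cast hq
    positivity
  -- A * η is an integer multiple of 2π
  have hAη : A * η = (k * p : ℕ) * (2 * Real.pi) := by
    have hq' : (q:ℝ) ≠ 0 := by exact_mod_cast hq.ne'
    rw [hA, hη]
    push_cast
    field_simp
  -- the average
  have key : ∀ t x : ℝ, η⁻¹ * (∫ s in x..(x + η), ρ t s) = ρstar := by
    intro t x
    set B : ℝ := -(A * (f ρstar * t)) with hB
    have hfun : ∀ s : ℝ, ρ t s = ρstar + b * Real.sin (A * s + B) := by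
      intro s
      rw [hρdef, hB]
      congr 2
      ring
    have h1 : (∫ s in x..(x + η), ρ t s)
        = ∫ s in x..(x + η), (ρstar + b * Real.sin (A * s + B)) := by
      apply intervalIntegral.integral_congr
      intro s _
      exact hfun s
    have hcont : Continuous fun s : ℝ => b * Real.sin (A * s + B) := by
      fun_prop
    have h2 : (∫ s in x..(x + η), (ρstar + b * Real.sin (A * s + B)))
        = (∫ s in x..(x + η), (ρstar : ℝ)) + ∫ s in x..(x + η), b * Real.sin (A * s + B) := by
      exact intervalIntegral.integral_add intervalIntegrable_const
        (hcont.intervalIntegrable _ _)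
    have h3 : (∫ s in x..(x + η), b * Real.sin (A * s + B))
        = b * ∫ s in x..(x + η), Real.sin (A * s + B) := by
      exact intervalIntegral.integral_const_mul _ _
    have h4 : (∫ s in x..(x + η), Real.sin (A * s + B)) = 0 := by
      rw [intervalIntegral.integral_comp_mul_add Real.sin hApos.ne' B, integral_sin]
      have : A * (x + η) + B = (A * x + B) + (k * p : ℕ) * (2 * Real.pi) := by
        rw [← hAη]; ring
      rw [this, Real.cos_add_nat_mul_two_pi, sub_self, smul_zero]
    rw [h1, h2, h3, h4, intervalIntegral.integral_const, mul_zero, add_zero,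
      add_sub_cancel_left, smul_eq_mul]
    field_simp
  refine ⟨fun t x _ => key t x, fun t x _ => by rw [hvdef, key], ?_, ?_⟩
  · intro t x ht
    set c : ℝ := f ρstar with hc
    -- time derivative
    have hdt : HasDerivAt (fun τ => ρ τ x)
        (b * (Real.cos (A * (x - c * t)) * (A * (-c)))) t := by
      have heq : (fun τ => ρ τ x) = fun τ => ρstar + b * Real.sin (A * (x - c * τ)) :=
        funext fun τ => hρdef τ x
      rw [heq]
      have h0 : HasDerivAt (fun τ : ℝ => x - c * τ) (-c) t := by
        simpa using ((hasDerivAt_id t).const_mul c).const_sub x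
      have h1 : HasDerivAt (fun τ : ℝ => A * (x - c * τ)) (A * (-c)) t := h0.const_mul A
      have h2 := (Real.hasDerivAt_sin (A * (x - c * t))).comp t h1
      exact ((h2.const_mul b).const_add ρstar)
    -- space derivative
    have hdx : HasDerivAt (fun y => ρ t y * v t y)
        ((b * (Real.cos (A * (x - c * t)) * (A * 1))) * c) x := by
      have heq : (fun y => ρ t y * v t y)
          = fun y => (ρstar + b * Real.sin (A * (y - c * t))) * c := by
        funext y
        rw [hρdef, hvdef, key]
      rw [heq]
      have h0 : HasDerivAt (fun y : ℝ => y - c * t) 1 x := by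
        simpa using (hasDerivAt_id x).sub_const (c * t)
      have h1 : HasDerivAt (fun y : ℝ => A * (y - c * t)) (A * 1) x := h0.const_mul A
      have h2 := (Real.hasDerivAt_sin (A * (x - c * t))).comp x h1
      exact ((h2.const_mul b).const_add ρstar).mul_const c
    rw [hdt.deriv, hdx.deriv]
    ring
  · intro t x ht
    rw [hρdef, hρdef]
    congr 1
    have : A * (x + 1 - f ρstar * t) = A * (x - f ρstar * t) + (k * q : ℕ) * (2 * Real.pi) := by
      push_cast [hA]; ring
    rw [show (2:ℝ) * k * q * Real.pi = A from rfl] at *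
    rw [this, Real.sin_add_nat_mul_two_pi]
end

section
/- Let ω : [0,1] → ℝ be nonnegative and non-increasing, N > 2 an integer, h = 1/N, and for ρ ∈ ℝ^N define B_N ρ = Σ_{i=0}^{N-1} ρ_i ∫_{ih}^{(i+1)h} ω(s)ds. Let ρ^{(1)} = (ρ_1, ..., ρ_{N-1}, ρ_0). Then for all ρ with ρ_min ≤ ρ_i ≤ ρ_max (componentwise, with 0 < ρ_min ≤ ρ_max): (∫_0^h ω(s)ds - ∫_{1-h}^1 ω(s)ds)(ρ_min - ρ_0) ≤ B_N ρ^{(1)} - B_N ρ ≤ (∫_0^h ω(s)ds - ∫_{1-h}^1 ω(s)ds)(ρ_max - ρ_0). -/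
open intervalIntegral

private lemma abel_key (f g : ℕ → ℝ) :
    ∀ n : ℕ, ∑ i ∈ Finset.range n, (f (i+1) - f i) * g i + (f 0 - f n) * g n
      = ∑ i ∈ Finset.range n, (f (i+1) - f 0) * (g i - g (i+1)) := by
  intro n
  induction n with
  | zero => simp
  | succ n ih =>
    rw [Finset.sum_range_succ, Finset.sum_range_succ]
    linear_combination ih

/-- Shift-difference estimate for the discrete convolution operator `B_N`. -/
theorem BN_shift_difference_bounds (ω : ℝ → ℝ)
    (hω0 : ∀ s ∈ Set.Icc (0:ℝ) 1, 0 ≤ ω s)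
    (hmono : ∀ s t : ℝ, 0 ≤ s → s ≤ t → t ≤ 1 → ω t ≤ ω s)
    (N : ℕ) (hN : 2 < N) (h : ℝ) (hh : h = 1 / N)
    (ρ : ℕ → ℝ) (ρmin ρmax : ℝ) (h0 : 0 < ρmin) (h1 : ρmin ≤ ρmax)
    (hbound : ∀ i, i < N → ρmin ≤ ρ i ∧ ρ i ≤ ρmax)
    (B : (ℕ → ℝ) → ℝ)
    (hB : ∀ r : ℕ → ℝ, B r =
      ∑ i ∈ Finset.range N, r i * ∫ s in ((i : ℝ) * h)..(((i : ℝ) + 1) * h), ω s)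
    (ρ1 : ℕ → ℝ) (hρ1 : ∀ i, ρ1 i = ρ ((i + 1) % N)) :
    ((∫ s in (0:ℝ)..h, ω s) - ∫ s in (1 - h)..1, ω s) * (ρmin - ρ 0) ≤ B ρ1 - B ρ ∧
      B ρ1 - B ρ ≤ ((∫ s in (0:ℝ)..h, ω s) - ∫ s in (1 - h)..1, ω s) * (ρmax - ρ 0) := by
  have hNpos : (0:ℝ) < (N:ℝ) := by positivity
  have hhpos : 0 < h := by rw [hh]; positivity
  have hNh : (N:ℝ) * h = 1 := by rw [hh]; field_simp
  set I : ℕ → ℝ := fun i => ∫ s in ((i:ℝ)*h)..(((i:ℝ)+1)*h), ω s with hI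
  have hN1 : N - 1 + 1 = N := by omega
  -- difference formula
  have hD : B ρ1 - B ρ = ∑ i ∈ Finset.range N, (ρ1 i - ρ i) * I i := by
    rw [hB, hB, ← Finset.sum_sub_distrib]
    exact Finset.sum_congr rfl fun i _ => by ring
  have hD2 : B ρ1 - B ρ = ∑ i ∈ Finset.range (N-1), (ρ (i+1) - ρ i) * I i
      + (ρ 0 - ρ (N-1)) * I (N-1) := by
    rw [hD]
    conv_lhs => rw [← hN1, Finset.sum_range_succ]
    congr 1
    · apply Finset.sum_congr rfl
      intro i hi
      simp only [Finset.mem_range] at hi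
      rw [hρ1, Nat.mod_eq_of_lt (by omega)]
    · rw [hρ1, hN1, Nat.mod_self]
  have hD3 : B ρ1 - B ρ = ∑ i ∈ Finset.range (N-1), (ρ (i+1) - ρ 0) * (I i - I (i+1)) :=
    hD2.trans (abel_key ρ I (N-1))
  -- antitonicity / integrability
  have hA : AntitoneOn ω (Set.Icc (0:ℝ) 1) := fun s hs t ht hst => hmono s t hs.1 hst ht.2
  have hint : ∀ a b : ℝ, 0 ≤ a → a ≤ b → b ≤ 1 → IntervalIntegrable ω MeasureTheory.volume a b := by
    intro a b ha hab hb1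
    exact (hA.mono (by rw [Set.uIcc_of_le hab]; exact Set.Icc_subset_Icc ha hb1)).intervalIntegrable
  -- each increment is nonpositive
  have hc : ∀ i : ℕ, i + 1 < N → I (i+1) ≤ I i := by
    intro i hi
    have hcast : ((i:ℝ)+2) ≤ (N:ℝ) := by exact_mod_cast (by omega : i + 2 ≤ N)
    have ha0 : (0:ℝ) ≤ (i:ℝ)*h := by positivity
    have hab : (i:ℝ)*h ≤ ((i:ℝ)+1)*h := by nlinarith
    have hb1 : ((i:ℝ)+1)*h ≤ 1 := by nlinarith
    have hb2 : ((i:ℝ)+1)*h + h ≤ 1 := by nlinarith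
    have hsub : (∫ s in ((i:ℝ)*h)..(((i:ℝ)+1)*h), ω (s + h)) = I (i+1) := by
      rw [intervalIntegral.integral_comp_add_right]
      have e1 : (i:ℝ)*h + h = ((i+1:ℕ):ℝ)*h := by push_cast; ring
      have e2 : ((i:ℝ)+1)*h + h = (((i+1:ℕ):ℝ)+1)*h := by push_cast; ring
      rw [e1, e2]
    rw [← hsub]
    have hint2 : IntervalIntegrable (fun s => ω (s + h)) MeasureTheory.volume
        ((i:ℝ)*h) (((i:ℝ)+1)*h) := by
      have : AntitoneOn (fun s => ω (s + h)) (Set.uIcc ((i:ℝ)*h) (((i:ℝ)+1)*h)) := by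
        rw [Set.uIcc_of_le hab]
        intro s hs t ht hst
        exact hmono (s + h) (t + h) (by linarith [hs.1]) (by linarith) (by linarith [ht.2])
      exact this.intervalIntegrable
    apply intervalIntegral.integral_mono_on hab hint2 (hint _ _ ha0 hab hb1)
    intro s hs
    exact hmono s (s + h) (by linarith [hs.1]) (by linarith) (by linarith [hs.2])
  have hsum : ∑ i ∈ Finset.range (N-1), (I i - I (i+1)) = I 0 - I (N-1) :=
    Finset.sum_range_sub' I (N-1)
  have hI0 : I 0 = ∫ s in (0:ℝ)..h, ω s := by
    simp [hI]
  have hIN : I (N-1) = ∫ s in (1-h)..1, ω s := by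
    have hcN : ((N-1:ℕ):ℝ) = (N:ℝ) - 1 := by
      push_cast [Nat.cast_sub (by omega : 1 ≤ N)]; ring
    have e1 : ((N-1:ℕ):ℝ) * h = 1 - h := by rw [hcN]; nlinarith
    have e2 : (((N-1:ℕ):ℝ)+1) * h = 1 := by rw [hcN]; nlinarith
    simp only [hI]
    rw [e1, e2]
  constructor
  · rw [hD3]
    calc ((∫ s in (0:ℝ)..h, ω s) - ∫ s in (1-h)..1, ω s) * (ρmin - ρ 0)
        = ∑ i ∈ Finset.range (N-1), (ρmin - ρ 0) * (I i - I (i+1)) := by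
          rw [← Finset.mul_sum, hsum, hI0, hIN]; ring
      _ ≤ ∑ i ∈ Finset.range (N-1), (ρ (i+1) - ρ 0) * (I i - I (i+1)) := by
          apply Finset.sum_le_sum
          intro i hi
          simp only [Finset.mem_range] at hi
          have hci : 0 ≤ I i - I (i+1) := sub_nonneg.2 (hc i (by omega))
          have := (hbound (i+1) (by omega)).1
          nlinarith
  · rw [hD3]
    calc ∑ i ∈ Finset.range (N-1), (ρ (i+1) - ρ 0) * (I i - I (i+1))
        ≤ ∑ i ∈ Finset.range (N-1), (ρmax - ρ 0) * (I i - I (i+1)) := by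
          apply Finset.sum_le_sum
          intro i hi
          simp only [Finset.mem_range] at hi
          have hci : 0 ≤ I i - I (i+1) := sub_nonneg.2 (hc i (by omega))
          have := (hbound (i+1) (by omega)).2
          nlinarith
      _ = ((∫ s in (0:ℝ)..h, ω s) - ∫ s in (1-h)..1, ω s) * (ρmax - ρ 0) := by
          rw [← Finset.mul_sum, hsum, hI0, hIN]; ring
end

section
/- Let ω : [0,1] → ℝ be nonnegative and non-increasing, N > 2, h = 1/N, B_N ρ = Σ_{i=0}^{N-1} ρ_i ∫_{ih}^{(i+1)h} ω(s)ds, and y = h^{-1}(ρ^{(1)} - ρ). Then |2 B_N ρ^{(1)} - B_N ρ - B_N ρ^{(2)}| ≤ 2 h² ω(0) ‖y‖_∞ for all ρ ∈ ℝ^N, where ρ^{(2)} = (ρ^{(1)})^{(1)}. -/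
open intervalIntegral

/-- Second shift-difference estimate for the discrete convolution `B_N`. -/
theorem BN_second_shift_difference_bound (ω : ℝ → ℝ)
    (hω0 : ∀ s ∈ Set.Icc (0:ℝ) 1, 0 ≤ ω s)
    (hmono : ∀ s t : ℝ, 0 ≤ s → s ≤ t → t ≤ 1 → ω t ≤ ω s)
    (N : ℕ) (hN : 2 < N) (h : ℝ) (hh : h = 1 / N)
    (ρ : ℕ → ℝ)
    (B : (ℕ → ℝ) → ℝ)
    (hB : ∀ r : ℕ → ℝ, B r =
      ∑ i ∈ Finset.range N, r i * ∫ s in ((i : ℝ) * h)..(((i : ℝ) + 1) * h), ω s)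
    (ρ1 ρ2 y : ℕ → ℝ)
    (hρ1 : ∀ i, ρ1 i = ρ ((i + 1) % N)) (hρ2 : ∀ i, ρ2 i = ρ ((i + 2) % N))
    (hy : ∀ i, y i = h⁻¹ * (ρ1 i - ρ i))
    (Y : ℝ) (hY : ∀ i, i < N → |y i| ≤ Y) :
    |2 * B ρ1 - B ρ - B ρ2| ≤ 2 * h ^ 2 * ω 0 * Y := by
  have hN0 : 0 < N := by omega
  have hNR : (0:ℝ) < N := by exact_mod_cast hN0
  have hh0 : 0 < h := by rw [hh]; positivity
  have hhne : h ≠ 0 := ne_of_gt hh0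
  set I : ℕ → ℝ := fun i => ∫ s in ((i : ℝ) * h)..(((i : ℝ) + 1) * h), ω s with hIdef
  -- endpoint bounds
  have hub : ∀ i : ℕ, i ≤ N → (i:ℝ) * h ≤ 1 := by
    intro i hi
    rw [hh]
    have : (i:ℝ) ≤ N := by exact_mod_cast hi
    calc (i:ℝ) * (1/N) ≤ (N:ℝ) * (1/N) := by
          apply mul_le_mul_of_nonneg_right this; positivity
      _ = 1 := by field_simp
  have hlb : ∀ i : ℕ, (0:ℝ) ≤ (i:ℝ) * h := fun i => by positivity
  have hanti : AntitoneOn ω (Set.Icc 0 1) := fun s hs t ht hst => hmono s t hs.1 hst ht.2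
  have hint : ∀ a b : ℝ, 0 ≤ a → a ≤ b → b ≤ 1 → IntervalIntegrable ω MeasureTheory.volume a b := by
    intro a b h0 hab h1
    apply AntitoneOn.intervalIntegrable
    apply hanti.mono
    rw [Set.uIcc_of_le hab]
    exact Set.Icc_subset_Icc h0 h1
  -- nonnegativity of I
  have hIpos : ∀ i : ℕ, i + 1 ≤ N → 0 ≤ I i := by
    intro i hi
    apply intervalIntegral.integral_nonneg
    · nlinarith [hlb i]
    · intro u hu
      apply hω0
      constructor
      · linarith [hlb i, hu.1]
      · have : ((i:ℝ) + 1) * h ≤ 1 := by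
          have := hub (i+1) hi
          push_cast at this
          linarith
        linarith [hu.2]
  -- I 0 ≤ h * ω 0
  have hI0 : I 0 ≤ h * ω 0 := by
    have h1 : h ≤ 1 := by
      have := hub 1 (by omega); simpa using this
    have e : I 0 = ∫ s in (0:ℝ)..h, ω s := by simp [hIdef]
    rw [e]
    have hle : (∫ s in (0:ℝ)..h, ω s) ≤ ∫ s in (0:ℝ)..h, ω 0 := by
      apply intervalIntegral.integral_mono_on (le_of_lt hh0)
        (hint 0 h le_rfl (le_of_lt hh0) h1) intervalIntegrable_const
      intro x hx
      exact hmono 0 x le_rfl hx.1 (hx.2.trans h1)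
    have ec : (∫ s in (0:ℝ)..h, ω 0) = h * ω 0 := by
      simp [mul_comm]
    linarith [hle, ec ▸ hle]
  -- monotone step
  have hstep : ∀ i : ℕ, i + 2 ≤ N → I (i+1) ≤ I i := by
    intro i hi
    have hub2 : ((i:ℝ) + 2) * h ≤ 1 := by
      have := hub (i+2) hi; push_cast at this; linarith
    have hlbi : (0:ℝ) ≤ (i:ℝ) * h := hlb i
    have hIi1 : I (i+1) = ∫ s in ((i:ℝ) * h)..(((i:ℝ) + 1) * h), ω (s + h) := by
      rw [intervalIntegral.integral_comp_add_right]
      show I (i+1) = _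
      simp only [hIdef]
      push_cast
      ring_nf
    rw [hIi1]
    apply intervalIntegral.integral_mono_on
    · nlinarith
    · have hsh := (hint ((i:ℝ)*h + h) (((i:ℝ)+1)*h + h) (by nlinarith) (by nlinarith)
        (by nlinarith)).comp_add_right h
      rw [show (i:ℝ)*h = (i:ℝ)*h + h - h by ring,
        show ((i:ℝ)+1)*h = ((i:ℝ)+1)*h + h - h by ring]
      exact hsh
    · apply hint <;> nlinarith
    · intro x hx
      apply hmono x (x + h)
      · linarith [hx.1]
      · linarith
      · nlinarith [hx.2]
  -- telescoping and positivity facts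
  have hYnn : 0 ≤ Y := le_trans (abs_nonneg _) (hY 0 hN0)
  have hω0nn : 0 ≤ ω 0 := hω0 0 (by constructor <;> norm_num)
  -- key algebraic identity
  have key : ∀ i, 2 * ρ1 i - ρ i - ρ2 i = h * (y i - y ((i+1) % N)) := by
    intro i
    have e1 : ρ1 i - ρ i = h * y i := by
      rw [hy i]; field_simp
    have e2 : ρ2 i - ρ1 i = h * y ((i+1) % N) := by
      rw [hy ((i+1) % N)]
      have ea : ρ1 ((i+1) % N) = ρ2 i := by
        rw [hρ1, hρ2, Nat.mod_add_mod]
      have eb : ρ ((i+1) % N) = ρ1 i := (hρ1 i).symm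
      rw [ea, eb]
      field_simp
    linarith [e1, e2]
  -- express the difference
  have hM : N - 1 + 1 = N := by omega
  have main : 2 * B ρ1 - B ρ - B ρ2 =
      h * (y 0 * (I 0 - I (N-1)) + ∑ i ∈ Finset.range (N-1), y (i+1) * (I (i+1) - I i)) := by
    rw [hB ρ1, hB ρ, hB ρ2]
    rw [Finset.mul_sum, ← Finset.sum_sub_distrib, ← Finset.sum_sub_distrib]
    have : ∀ i ∈ Finset.range N,
        2 * (ρ1 i * I i) - ρ i * I i - ρ2 i * I i = h * (y i - y ((i+1) % N)) * I i := by
      intro i _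
      rw [← key i]; ring
    rw [Finset.sum_congr rfl this]
    have split : ∑ i ∈ Finset.range N, h * (y i - y ((i+1) % N)) * I i
        = h * ((∑ i ∈ Finset.range N, y i * I i) - ∑ i ∈ Finset.range N, y ((i+1) % N) * I i) := by
      rw [← Finset.sum_sub_distrib, Finset.mul_sum]
      apply Finset.sum_congr rfl
      intro i _; ring
    rw [split]
    congr 1
    -- reindex both sums
    have s1 : ∑ i ∈ Finset.range N, y i * I i
        = (∑ i ∈ Finset.range (N-1), y (i+1) * I (i+1)) + y 0 * I 0 := by
      have e := Finset.sum_range_succ' (fun i => y i * I i) (N-1)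
      rw [hM] at e
      exact e
    have s2 : ∑ i ∈ Finset.range N, y ((i+1) % N) * I i
        = (∑ i ∈ Finset.range (N-1), y (i+1) * I i) + y 0 * I (N-1) := by
      have e := Finset.sum_range_succ (fun i => y ((i+1) % N) * I i) (N-1)
      rw [hM] at e
      rw [e]
      congr 1
      · apply Finset.sum_congr rfl
        intro i hi
        rw [Finset.mem_range] at hi
        congr 2
        exact Nat.mod_eq_of_lt (by omega)
      · congr 2
        exact Nat.mod_self N
    have s3 : ∑ i ∈ Finset.range (N-1), y (i+1) * (I (i+1) - I i)
        = (∑ i ∈ Finset.range (N-1), y (i+1) * I (i+1))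
          - ∑ i ∈ Finset.range (N-1), y (i+1) * I i := by
      rw [← Finset.sum_sub_distrib]
      apply Finset.sum_congr rfl
      intro i _; ring
    rw [s1, s2, s3]
    ring
  -- final estimate
  rw [main, abs_mul, abs_of_pos hh0]
  have hIN1 : I (N-1) ≤ I 0 := by
    have tele : ∑ i ∈ Finset.range (N-1), (I i - I (i+1)) = I 0 - I (N-1) := by
      rw [Finset.sum_range_sub' I (N-1)]
    have : 0 ≤ ∑ i ∈ Finset.range (N-1), (I i - I (i+1)) := by
      apply Finset.sum_nonneg
      intro i hi
      rw [Finset.mem_range] at hi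
      linarith [hstep i (by omega)]
    linarith [tele ▸ this]
  have hsum : |∑ i ∈ Finset.range (N-1), y (i+1) * (I (i+1) - I i)| ≤ Y * (I 0 - I (N-1)) := by
    calc |∑ i ∈ Finset.range (N-1), y (i+1) * (I (i+1) - I i)|
        ≤ ∑ i ∈ Finset.range (N-1), |y (i+1) * (I (i+1) - I i)| := Finset.abs_sum_le_sum_abs _ _
      _ ≤ ∑ i ∈ Finset.range (N-1), Y * (I i - I (i+1)) := by
          apply Finset.sum_le_sum
          intro i hi
          rw [Finset.mem_range] at hi
          rw [abs_mul]
          have hs := hstep i (by omega)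
          rw [abs_of_nonpos (by linarith : I (i+1) - I i ≤ 0)]
          have : |y (i+1)| ≤ Y := hY (i+1) (by omega)
          apply mul_le_mul this (by linarith) (by linarith) hYnn
      _ = Y * (I 0 - I (N-1)) := by
          rw [← Finset.mul_sum, Finset.sum_range_sub' I (N-1)]
  have habs : |y 0 * (I 0 - I (N-1)) + ∑ i ∈ Finset.range (N-1), y (i+1) * (I (i+1) - I i)|
      ≤ 2 * Y * (I 0 - I (N-1)) := by
    calc |y 0 * (I 0 - I (N-1)) + ∑ i ∈ Finset.range (N-1), y (i+1) * (I (i+1) - I i)|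
        ≤ |y 0 * (I 0 - I (N-1))| + |∑ i ∈ Finset.range (N-1), y (i+1) * (I (i+1) - I i)| :=
          abs_add_le _ _
      _ ≤ Y * (I 0 - I (N-1)) + Y * (I 0 - I (N-1)) := by
          apply add_le_add _ hsum
          rw [abs_mul, abs_of_nonneg (by linarith : (0:ℝ) ≤ I 0 - I (N-1))]
          exact mul_le_mul_of_nonneg_right (hY 0 hN0) (by linarith)
      _ = 2 * Y * (I 0 - I (N-1)) := by ring
  have hIN1nn : 0 ≤ I (N-1) := hIpos (N-1) (by omega)
  calc h * |y 0 * (I 0 - I (N-1)) + ∑ i ∈ Finset.range (N-1), y (i+1) * (I (i+1) - I i)|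
      ≤ h * (2 * Y * (I 0 - I (N-1))) := by
        apply mul_le_mul_of_nonneg_left habs (le_of_lt hh0)
    _ ≤ h * (2 * Y * (h * ω 0)) := by
        apply mul_le_mul_of_nonneg_left _ (le_of_lt hh0)
        apply mul_le_mul_of_nonneg_left _ (by linarith)
        linarith
    _ = 2 * h ^ 2 * ω 0 * Y := by ring
end

section
/- Let M ≥ 0, ω, ω̃ : [0,1] → [0,∞) non-increasing, f, g : ℝ → ℝ with |f'| ≤ M, |g'| ≤ M, |f| ≤ M, |g| ≤ M on [0,∞). For 1-periodic continuous positive functions ρ, ρ̄ on ℝ and η, ζ ∈ (0,1], define (K(ρ))(x) = f(∫_x^{x+η} ω(s-x)ρ(s)ds) · g(∫_{x-ζ}^x ω̃(x-s)ρ(s)ds). Then for all x: |(K(ρ))(x) - (K(ρ̄))(x)| ≤ M²(ω(0) + ω̃(0)) (∫_0^1 |ρ(s) - ρ̄(s)|² ds)^{1/2}. -/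
open intervalIntegral MeasureTheory

private lemma lip_of_deriv_aux (f : ℝ → ℝ) (M : ℝ) (hfd : Differentiable ℝ f)
    (hf' : ∀ x : ℝ, 0 ≤ x → |deriv f x| ≤ M) {a b : ℝ} (ha : 0 ≤ a) (hb : 0 ≤ b) :
    |f b - f a| ≤ M * |b - a| := by
  have := Convex.norm_image_sub_le_of_norm_deriv_le (f := f)
    (s := Set.Ici (0:ℝ))
    (fun x _ => hfd x)
    (fun x hx => by simpa [Real.norm_eq_abs] using hf' x hx) (convex_Ici 0) ha hb
  simpa [Real.norm_eq_abs] using this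

private lemma per_int_le_aux (h : ℝ → ℝ) (hc : Continuous h)
    (hper : Function.Periodic h 1) (hpos : ∀ x, 0 ≤ h x) (a b : ℝ)
    (hab : a ≤ b) (hba : b ≤ a + 1) :
    (∫ s in a..b, h s) ≤ ∫ s in (0:ℝ)..1, h s := by
  have h1 : (∫ s in a..b, h s) ≤ ∫ s in a..(a + 1), h s :=
    intervalIntegral.integral_mono_interval le_rfl hab hba
      (Filter.Eventually.of_forall hpos) (hc.intervalIntegrable _ _)
  have h2 : (∫ s in a..(a + 1), h s) = ∫ s in (0:ℝ)..(0 + 1), h s :=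
    hper.intervalIntegral_add_eq a 0
  calc (∫ s in a..b, h s) ≤ ∫ s in a..(a + 1), h s := h1
    _ = ∫ s in (0:ℝ)..1, h s := by rw [h2]; norm_num

private lemma cauchy_schwarz_aux (d : ℝ → ℝ) (hdc : Continuous d)
    (hdpos : ∀ x, 0 ≤ d x) :
    (∫ s in (0:ℝ)..1, d s) ≤ Real.sqrt (∫ s in (0:ℝ)..1, d s ^ 2) := by
  haveI : IsFiniteMeasure (volume.restrict (Set.Ioc (0:ℝ) 1)) := ⟨by simp⟩
  set μ := volume.restrict (Set.Ioc (0:ℝ) 1) with hμ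
  obtain ⟨C, hC⟩ := (isCompact_Icc (a := (0:ℝ)) (b := 1)).exists_bound_of_continuousOn
    hdc.continuousOn
  have hmem : MemLp d (ENNReal.ofReal 2) μ := by
    refine MemLp.of_bound hdc.aestronglyMeasurable.restrict C ?_
    refine (ae_restrict_iff' measurableSet_Ioc).2 (Filter.Eventually.of_forall ?_)
    exact fun s hs => hC s (Set.Ioc_subset_Icc_self hs)
  have hone : MemLp (fun _ : ℝ => (1:ℝ)) (ENNReal.ofReal 2) μ := memLp_const 1
  have hpq : Real.HolderConjugate 2 2 := ⟨by norm_num, by norm_num, by norm_num⟩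
  have key := MeasureTheory.integral_mul_le_Lp_mul_Lq_of_nonneg (μ := μ) hpq
    (f := d) (g := fun _ => (1:ℝ)) (Filter.Eventually.of_forall hdpos)
    (Filter.Eventually.of_forall fun _ => zero_le_one) hmem hone
  have hconst : (∫ _ : ℝ, ((1:ℝ) ^ (2:ℝ)) ∂μ) = 1 := by simp [hμ]
  rw [hconst] at key
  have key2 : (∫ a, d a ∂μ) ≤ (∫ a, d a ^ (2:ℝ) ∂μ) ^ (1 / (2:ℝ)) := by
    simpa using key
  have hrw : (∫ a, d a ^ (2:ℝ) ∂μ) = ∫ a, d a ^ 2 ∂μ := by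
    refine integral_congr_ae (Filter.Eventually.of_forall fun a => ?_)
    show d a ^ (2:ℝ) = d a ^ (2:ℕ)
    rw [show ((2:ℝ)) = ((2:ℕ):ℝ) by norm_num, Real.rpow_natCast]
  rw [hrw] at key2
  rw [intervalIntegral.integral_of_le zero_le_one, intervalIntegral.integral_of_le zero_le_one]
  rw [Real.sqrt_eq_rpow]
  exact key2

/-- Lipschitz-type estimate for the non-local speed mapping in the L² norm. -/
theorem nonlocal_speed_L2_lipschitz (M : ℝ) (hM : 0 ≤ M)
    (ω ωt : ℝ → ℝ)
    (hωpos : ∀ s ∈ Set.Icc (0:ℝ) 1, 0 ≤ ω s)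
    (hωtpos : ∀ s ∈ Set.Icc (0:ℝ) 1, 0 ≤ ωt s)
    (hωmono : ∀ s t : ℝ, 0 ≤ s → s ≤ t → t ≤ 1 → ω t ≤ ω s)
    (hωtmono : ∀ s t : ℝ, 0 ≤ s → s ≤ t → t ≤ 1 → ωt t ≤ ωt s)
    (f g : ℝ → ℝ) (hfd : Differentiable ℝ f) (hgd : Differentiable ℝ g)
    (hf' : ∀ x : ℝ, 0 ≤ x → |deriv f x| ≤ M)
    (hg' : ∀ x : ℝ, 0 ≤ x → |deriv g x| ≤ M)
    (hfb : ∀ x : ℝ, 0 ≤ x → |f x| ≤ M)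
    (hgb : ∀ x : ℝ, 0 ≤ x → |g x| ≤ M)
    (η ζ : ℝ) (hη0 : 0 < η) (hη1 : η ≤ 1) (hζ0 : 0 < ζ) (hζ1 : ζ ≤ 1)
    (ρ ρb : ℝ → ℝ) (hρc : Continuous ρ) (hρbc : Continuous ρb)
    (hρper : ∀ x : ℝ, ρ (x + 1) = ρ x) (hρbper : ∀ x : ℝ, ρb (x + 1) = ρb x)
    (hρpos : ∀ x : ℝ, 0 < ρ x) (hρbpos : ∀ x : ℝ, 0 < ρb x)
    (K : (ℝ → ℝ) → ℝ → ℝ)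
    (hK : ∀ (r : ℝ → ℝ) (x : ℝ), K r x =
      f (∫ s in x..(x + η), ω (s - x) * r s) * g (∫ s in (x - ζ)..x, ωt (x - s) * r s)) :
    ∀ x : ℝ, |K ρ x - K ρb x| ≤
      M ^ 2 * (ω 0 + ωt 0) * Real.sqrt (∫ s in (0:ℝ)..1, |ρ s - ρb s| ^ 2) := by
  intro x
  set d : ℝ → ℝ := fun s => |ρ s - ρb s| with hd
  have hdc : Continuous d := (hρc.sub hρbc).abs
  have hdpos : ∀ s, 0 ≤ d s := fun s => abs_nonneg _
  have hdper : Function.Periodic d 1 := by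
    intro s; simp only [hd]; rw [hρper, hρbper]
  set L : ℝ := ∫ s in (0:ℝ)..1, d s with hL
  have hL0 : 0 ≤ L := intervalIntegral.integral_nonneg zero_le_one fun s _ => hdpos s
  have hω0 : 0 ≤ ω 0 := hωpos 0 ⟨le_refl 0, zero_le_one⟩
  have hωt0 : 0 ≤ ωt 0 := hωtpos 0 ⟨le_refl 0, zero_le_one⟩
  -- integrability
  have hωanti : AntitoneOn (fun s => ω (s - x)) (Set.uIcc x (x + η)) := by
    intro a ha b hb hab
    rw [Set.uIcc_of_le (by linarith)] at ha hb
    exact hωmono (a - x) (b - x) (by linarith [ha.1]) (by linarith) (by linarith [hb.2])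
  have hωint : IntervalIntegrable (fun s => ω (s - x)) volume x (x + η) :=
    hωanti.intervalIntegrable
  have hωtmono' : MonotoneOn (fun s => ωt (x - s)) (Set.uIcc (x - ζ) x) := by
    intro a ha b hb hab
    rw [Set.uIcc_of_le (by linarith)] at ha hb
    exact hωtmono (x - b) (x - a) (by linarith [hb.2]) (by linarith) (by linarith [ha.1])
  have hωtint : IntervalIntegrable (fun s => ωt (x - s)) volume (x - ζ) x :=
    hωtmono'.intervalIntegrable
  have hint1 : IntervalIntegrable (fun s => ω (s - x) * ρ s) volume x (x + η) :=
    hωint.mul_continuousOn hρc.continuousOn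
  have hint2 : IntervalIntegrable (fun s => ω (s - x) * ρb s) volume x (x + η) :=
    hωint.mul_continuousOn hρbc.continuousOn
  have hint3 : IntervalIntegrable (fun s => ω (s - x) * (ρ s - ρb s)) volume x (x + η) :=
    hωint.mul_continuousOn (hρc.sub hρbc).continuousOn
  have hint1' : IntervalIntegrable (fun s => ωt (x - s) * ρ s) volume (x - ζ) x :=
    hωtint.mul_continuousOn hρc.continuousOn
  have hint2' : IntervalIntegrable (fun s => ωt (x - s) * ρb s) volume (x - ζ) x :=
    hωtint.mul_continuousOn hρbc.continuousOn
  have hint3' : IntervalIntegrable (fun s => ωt (x - s) * (ρ s - ρb s)) volume (x - ζ) x :=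
    hωtint.mul_continuousOn (hρc.sub hρbc).continuousOn
  rw [hK ρ x, hK ρb x]
  set A : ℝ := ∫ s in x..(x + η), ω (s - x) * ρ s with hA
  set Ab : ℝ := ∫ s in x..(x + η), ω (s - x) * ρb s with hAb
  set B : ℝ := ∫ s in (x - ζ)..x, ωt (x - s) * ρ s with hB
  set Bb : ℝ := ∫ s in (x - ζ)..x, ωt (x - s) * ρb s with hBb
  have hxη : x ≤ x + η := by linarith
  have hxζ : x - ζ ≤ x := by linarith
  have hA0 : 0 ≤ A := intervalIntegral.integral_nonneg hxη fun s hs =>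
    mul_nonneg (hωpos (s - x) ⟨by linarith [hs.1], by linarith [hs.2]⟩) (hρpos s).le
  have hAb0 : 0 ≤ Ab := intervalIntegral.integral_nonneg hxη fun s hs =>
    mul_nonneg (hωpos (s - x) ⟨by linarith [hs.1], by linarith [hs.2]⟩) (hρbpos s).le
  have hB0 : 0 ≤ B := intervalIntegral.integral_nonneg hxζ fun s hs =>
    mul_nonneg (hωtpos (x - s) ⟨by linarith [hs.2], by linarith [hs.1]⟩) (hρpos s).le
  have hBb0 : 0 ≤ Bb := intervalIntegral.integral_nonneg hxζ fun s hs =>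
    mul_nonneg (hωtpos (x - s) ⟨by linarith [hs.2], by linarith [hs.1]⟩) (hρbpos s).le
  -- bound |A - Ab|
  have hAdiff : A - Ab = ∫ s in x..(x + η), ω (s - x) * (ρ s - ρb s) := by
    rw [hA, hAb, ← intervalIntegral.integral_sub hint1 hint2]
    apply intervalIntegral.integral_congr
    intro s _; ring
  have hAbound : |A - Ab| ≤ ω 0 * L := by
    rw [hAdiff]
    calc |∫ s in x..(x + η), ω (s - x) * (ρ s - ρb s)|
        ≤ ∫ s in x..(x + η), |ω (s - x) * (ρ s - ρb s)| := by
          simpa only [Real.norm_eq_abs] using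
            intervalIntegral.norm_integral_le_integral_norm (μ := volume)
              (f := fun s => ω (s - x) * (ρ s - ρb s)) hxη
      _ ≤ ∫ s in x..(x + η), ω 0 * d s := by
          apply intervalIntegral.integral_mono_on hxη hint3.abs
            ((continuous_const.mul hdc).intervalIntegrable _ _)
          intro s hs
          rw [abs_mul]
          have h1 : 0 ≤ ω (s - x) :=
            hωpos (s - x) ⟨by linarith [hs.1], by linarith [hs.2]⟩
          have h2 : ω (s - x) ≤ ω 0 :=
            hωmono 0 (s - x) le_rfl (by linarith [hs.1]) (by linarith [hs.2])
          rw [abs_of_nonneg h1]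
          exact mul_le_mul_of_nonneg_right h2 (abs_nonneg _)
      _ = ω 0 * ∫ s in x..(x + η), d s := intervalIntegral.integral_const_mul _ _
      _ ≤ ω 0 * L := mul_le_mul_of_nonneg_left
            (per_int_le_aux d hdc hdper hdpos x (x + η) hxη (by linarith)) hω0
  -- bound |B - Bb|
  have hBdiff : B - Bb = ∫ s in (x - ζ)..x, ωt (x - s) * (ρ s - ρb s) := by
    rw [hB, hBb, ← intervalIntegral.integral_sub hint1' hint2']
    apply intervalIntegral.integral_congr
    intro s _; ring
  have hBbound : |B - Bb| ≤ ωt 0 * L := by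
    rw [hBdiff]
    calc |∫ s in (x - ζ)..x, ωt (x - s) * (ρ s - ρb s)|
        ≤ ∫ s in (x - ζ)..x, |ωt (x - s) * (ρ s - ρb s)| := by
          simpa only [Real.norm_eq_abs] using
            intervalIntegral.norm_integral_le_integral_norm (μ := volume)
              (f := fun s => ωt (x - s) * (ρ s - ρb s)) hxζ
      _ ≤ ∫ s in (x - ζ)..x, ωt 0 * d s := by
          apply intervalIntegral.integral_mono_on hxζ hint3'.abs
            ((continuous_const.mul hdc).intervalIntegrable _ _)
          intro s hs
          rw [abs_mul]
          have h1 : 0 ≤ ωt (x - s) :=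
            hωtpos (x - s) ⟨by linarith [hs.2], by linarith [hs.1]⟩
          have h2 : ωt (x - s) ≤ ωt 0 :=
            hωtmono 0 (x - s) le_rfl (by linarith [hs.2]) (by linarith [hs.1])
          rw [abs_of_nonneg h1]
          exact mul_le_mul_of_nonneg_right h2 (abs_nonneg _)
      _ = ωt 0 * ∫ s in (x - ζ)..x, d s := intervalIntegral.integral_const_mul _ _
      _ ≤ ωt 0 * L := mul_le_mul_of_nonneg_left
            (per_int_le_aux d hdc hdper hdpos (x - ζ) x hxζ (by linarith)) hωt0
  -- Lipschitz estimates
  have hfA : |f A - f Ab| ≤ M * (ω 0 * L) :=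
    (lip_of_deriv_aux f M hfd hf' hAb0 hA0).trans
      (mul_le_mul_of_nonneg_left hAbound hM)
  have hgB : |g B - g Bb| ≤ M * (ωt 0 * L) :=
    (lip_of_deriv_aux g M hgd hg' hBb0 hB0).trans
      (mul_le_mul_of_nonneg_left hBbound hM)
  have hgBb2 : |g B| ≤ M := hgb B hB0
  have hfAb2 : |f Ab| ≤ M := hfb Ab hAb0
  have hCS : L ≤ Real.sqrt (∫ s in (0:ℝ)..1, |ρ s - ρb s| ^ 2) := by
    have := cauchy_schwarz_aux d hdc hdpos
    simpa [hd] using this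
  calc |f A * g B - f Ab * g Bb|
      = |(f A - f Ab) * g B + f Ab * (g B - g Bb)| := by ring_nf
    _ ≤ |(f A - f Ab) * g B| + |f Ab * (g B - g Bb)| := abs_add_le _ _
    _ = |f A - f Ab| * |g B| + |f Ab| * |g B - g Bb| := by rw [abs_mul, abs_mul]
    _ ≤ (M * (ω 0 * L)) * M + M * (M * (ωt 0 * L)) :=
        add_le_add
          (mul_le_mul hfA hgBb2 (abs_nonneg _) (by positivity))
          (mul_le_mul hfAb2 hgB (abs_nonneg _) hM)
    _ = M ^ 2 * (ω 0 + ωt 0) * L := by ring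
    _ ≤ M ^ 2 * (ω 0 + ωt 0) * Real.sqrt (∫ s in (0:ℝ)..1, |ρ s - ρb s| ^ 2) :=
        mul_le_mul_of_nonneg_left hCS (by positivity)
end

section
/- Let ρ ∈ C¹([0,∞)×ℝ) be 1-periodic in x and positive, satisfying ∂ρ/∂t + ∂(ρv)/∂x = 0 for some v ∈ C¹ that is 1-periodic in x. Let ρ* = ∫_0^1 ρ(0,x)dx and V(t) = ∫_0^1 (ρ(t,x) ln(ρ(t,x)/ρ*) + ρ* - ρ(t,x)) dx. Then dV/dt(t) = ∫_0^1 (ρ* - ρ(t,x)) (∂v/∂x)(t,x) dx for all t ≥ 0. -/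
open intervalIntegral

section Aux

/-- Partial derivative in the second variable as a `HasDerivAt`. -/
lemma hasDerivAt_snd (f : ℝ → ℝ → ℝ)
    (hf : ContDiff ℝ 1 (fun p : ℝ × ℝ => f p.1 p.2)) (t x : ℝ) :
    HasDerivAt (fun y => f t y)
      (fderiv ℝ (fun p : ℝ × ℝ => f p.1 p.2) (t, x) (0, 1)) x := by
  have h := ((hf.differentiable one_ne_zero) (t, x)).hasFDerivAt
  have hc : HasDerivAt (fun y : ℝ => ((t, y) : ℝ × ℝ)) ((0 : ℝ), (1 : ℝ)) x :=
    (hasDerivAt_const x t).prodMk (hasDerivAt_id x)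
  exact h.comp_hasDerivAt x hc

/-- Partial derivative in the first variable as a `HasDerivAt`. -/
lemma hasDerivAt_fst (f : ℝ → ℝ → ℝ)
    (hf : ContDiff ℝ 1 (fun p : ℝ × ℝ => f p.1 p.2)) (t x : ℝ) :
    HasDerivAt (fun τ => f τ x)
      (fderiv ℝ (fun p : ℝ × ℝ => f p.1 p.2) (t, x) (1, 0)) t := by
  have h := ((hf.differentiable one_ne_zero) (t, x)).hasFDerivAt
  have hc : HasDerivAt (fun τ : ℝ => ((τ, x) : ℝ × ℝ)) ((1 : ℝ), (0 : ℝ)) t :=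
    (hasDerivAt_id t).prodMk (hasDerivAt_const t x)
  exact h.comp_hasDerivAt t hc

lemma continuous_fderiv_apply (f : ℝ × ℝ → ℝ) (hf : ContDiff ℝ 1 f) (w : ℝ × ℝ) :
    Continuous (fun p => fderiv ℝ f p w) :=
  (hf.continuous_fderiv one_ne_zero).clm_apply continuous_const

end Aux

/-- Time derivative of the relative entropy along the continuity equation on the circle. -/
theorem entropy_derivative (ρ v : ℝ → ℝ → ℝ)
    (hρ : ContDiff ℝ 1 (fun p : ℝ × ℝ => ρ p.1 p.2))
    (hv : ContDiff ℝ 1 (fun p : ℝ × ℝ => v p.1 p.2))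
    (hρper : ∀ t x : ℝ, ρ t (x + 1) = ρ t x)
    (hvper : ∀ t x : ℝ, v t (x + 1) = v t x)
    (hρpos : ∀ t x : ℝ, 0 < ρ t x)
    (hpde : ∀ t x : ℝ, 0 ≤ t →
      deriv (fun τ => ρ τ x) t + deriv (fun y => ρ t y * v t y) x = 0)
    (ρstar : ℝ) (hρstar : ρstar = ∫ x in (0:ℝ)..1, ρ 0 x)
    (V : ℝ → ℝ)
    (hV : ∀ t : ℝ, V t =
      ∫ x in (0:ℝ)..1, (ρ t x * Real.log (ρ t x / ρstar) + ρstar - ρ t x)) :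
    ∀ t : ℝ, 0 ≤ t →
      deriv V t = ∫ x in (0:ℝ)..1, (ρstar - ρ t x) * deriv (fun y => v t y) x := by
  intro t ht
  set R : ℝ × ℝ → ℝ := fun p => ρ p.1 p.2 with hR
  set W : ℝ × ℝ → ℝ := fun p => v p.1 p.2 with hW
  have hRc : Continuous R := hρ.continuous
  have hWc : Continuous W := hv.continuous
  -- ρstar > 0
  have hρstar_pos : 0 < ρstar := by
    rw [hρstar]
    apply intervalIntegral.intervalIntegral_pos_of_pos_on
    · exact ((hRc.comp (continuous_const.prodMk continuous_id)).intervalIntegrable 0 1)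
    · intro x _; exact hρpos 0 x
    · norm_num
  -- partial derivatives
  set ρt : ℝ → ℝ → ℝ := fun s x => fderiv ℝ R (s, x) (1, 0) with hρt_def
  set ρx : ℝ → ℝ → ℝ := fun s x => fderiv ℝ R (s, x) (0, 1) with hρx_def
  set vx : ℝ → ℝ → ℝ := fun s x => fderiv ℝ W (s, x) (0, 1) with hvx_def
  have hρt_c : Continuous (fun p : ℝ × ℝ => ρt p.1 p.2) := continuous_fderiv_apply R hρ _
  have hρx_c : Continuous (fun p : ℝ × ℝ => ρx p.1 p.2) := continuous_fderiv_apply R hρ _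
  have hvx_c : Continuous (fun p : ℝ × ℝ => vx p.1 p.2) := continuous_fderiv_apply W hv _
  have hρne : ∀ s x : ℝ, ρ s x ≠ 0 := fun s x => (hρpos s x).ne'
  -- the integrand and its time derivative
  set F : ℝ → ℝ → ℝ :=
    fun s x => ρ s x * Real.log (ρ s x / ρstar) + ρstar - ρ s x with hF_def
  set F' : ℝ → ℝ → ℝ := fun s x => ρt s x * Real.log (ρ s x / ρstar) with hF'_def
  have hF'_c : Continuous (fun p : ℝ × ℝ => F' p.1 p.2) := by
    apply hρt_c.mul
    rw [continuous_iff_continuousAt]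
    intro p
    exact (hRc.continuousAt.div_const ρstar).log
      (div_ne_zero (hρne p.1 p.2) hρstar_pos.ne')
  have hF_c : Continuous (fun p : ℝ × ℝ => F p.1 p.2) := by
    apply Continuous.sub _ hRc
    apply Continuous.add _ continuous_const
    apply hRc.mul
    rw [continuous_iff_continuousAt]
    intro p
    exact (hRc.continuousAt.div_const ρstar).log
      (div_ne_zero (hρne p.1 p.2) hρstar_pos.ne')
  -- time differentiability of the integrand
  have hF_deriv : ∀ s x : ℝ, HasDerivAt (fun τ => F τ x) (F' s x) s := by
    intro s x
    have h1 : HasDerivAt (fun τ => ρ τ x) (ρt s x) s := hasDerivAt_fst ρ hρ s x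
    have hlog : HasDerivAt (fun τ => Real.log (ρ τ x)) (ρt s x / ρ s x) s :=
      h1.log (hρne s x)
    have h2 : HasDerivAt
        (fun τ => ρ τ x * (Real.log (ρ τ x) - Real.log ρstar) + ρstar - ρ τ x)
        (ρt s x * (Real.log (ρ s x) - Real.log ρstar)
          + ρ s x * (ρt s x / ρ s x) + 0 - ρt s x) s := by
      exact ((h1.mul (hlog.sub_const _)).add (hasDerivAt_const s ρstar)).sub h1
    have heq : (fun τ => F τ x)
        = fun τ => ρ τ x * (Real.log (ρ τ x) - Real.log ρstar) + ρstar - ρ τ x := by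
      funext τ
      simp only [hF_def, Real.log_div (hρne τ x) hρstar_pos.ne']
    rw [heq]
    convert h2 using 1
    have hc : ρ s x * (ρt s x / ρ s x) = ρt s x := by
      rw [← mul_div_assoc]; exact mul_div_cancel_left₀ _ (hρne s x)
    simp only [hF'_def, Real.log_div (hρne s x) hρstar_pos.ne', hc]
    ring
  -- differentiate under the integral sign
  have key : HasDerivAt (fun s => ∫ x in (0:ℝ)..1, F s x) (∫ x in (0:ℝ)..1, F' t x) t := by
    have hK : IsCompact ((Set.Icc (t-1) (t+1)) ×ˢ (Set.Icc (0:ℝ) 1)) :=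
      isCompact_Icc.prod isCompact_Icc
    obtain ⟨C, hC⟩ := hK.exists_bound_of_continuousOn hF'_c.continuousOn
    refine (intervalIntegral.hasDerivAt_integral_of_dominated_loc_of_deriv_le
      (F := F) (F' := F') (bound := fun _ => C) (s := Metric.ball t 1) (Metric.ball_mem_nhds t one_pos) ?_ ?_ ?_ ?_ ?_ ?_).2
    · filter_upwards with s
      exact ((hF_c.comp (continuous_const.prodMk continuous_id)).aestronglyMeasurable)
    · exact (hF_c.comp (continuous_const.prodMk continuous_id)).intervalIntegrable 0 1
    · exact ((hF'_c.comp (continuous_const.prodMk continuous_id)).aestronglyMeasurable)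
    · filter_upwards with x hx s hs
      refine hC (s, x) ?_
      constructor
      · simp only [Metric.mem_ball, Real.dist_eq] at hs
        constructor <;> [linarith [abs_le.mp hs.le |>.1]; linarith [abs_le.mp hs.le |>.2]]
      · rw [Set.uIoc_of_le (by norm_num : (0:ℝ) ≤ 1)] at hx
        exact ⟨hx.1.le, hx.2⟩
    · exact intervalIntegrable_const
    · filter_upwards with x _ s _
      exact hF_deriv s x
  -- deriv V t = ∫ F' t x
  have hVfun : V = fun s => ∫ x in (0:ℝ)..1, F s x := funext hV
  have hderivV : deriv V t = ∫ x in (0:ℝ)..1, F' t x := by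
    rw [hVfun]; exact key.deriv
  -- Now the spatial identity. Define the flux potential Φ.
  set Φ : ℝ → ℝ := fun x =>
    -(ρ t x * v t x) * Real.log (ρ t x / ρstar) + ρ t x * v t x - ρstar * v t x with hΦ_def
  -- integrand g of the difference
  set g : ℝ → ℝ := fun x => F' t x - (ρstar - ρ t x) * vx t x with hg_def
  have hΦderiv : ∀ x : ℝ, HasDerivAt Φ (g x) x := by
    intro x
    have hρd : HasDerivAt (fun y => ρ t y) (ρx t x) x := hasDerivAt_snd ρ hρ t x
    have hvd : HasDerivAt (fun y => v t y) (vx t x) x := hasDerivAt_snd v hv t x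
    have hPd : HasDerivAt (fun y => ρ t y * v t y)
        (ρx t x * v t x + ρ t x * vx t x) x := hρd.mul hvd
    have hlog : HasDerivAt (fun y => Real.log (ρ t y)) (ρx t x / ρ t x) x :=
      hρd.log (hρne t x)
    have hΦ' : HasDerivAt Φ
        (-((ρx t x * v t x + ρ t x * vx t x) * (Real.log (ρ t x) - Real.log ρstar)
            + ρ t x * v t x * (ρx t x / ρ t x))
          + (ρx t x * v t x + ρ t x * vx t x) - ρstar * vx t x) x := by
      have heq : Φ = fun y =>
          -(ρ t y * v t y * (Real.log (ρ t y) - Real.log ρstar))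
            + ρ t y * v t y - ρstar * v t y := by
        funext y
        simp only [hΦ_def, Real.log_div (hρne t y) hρstar_pos.ne']
        ring
      rw [heq]
      exact (((hPd.mul (hlog.sub_const _)).neg).add hPd).sub (hvd.const_mul ρstar)
    convert hΦ' using 1
    -- g x equals that expression, using the PDE
    have hpde' := hpde t x ht
    have h1 : deriv (fun τ => ρ τ x) t = ρt t x := (hasDerivAt_fst ρ hρ t x).deriv
    have h2 : deriv (fun y => ρ t y * v t y) x = ρx t x * v t x + ρ t x * vx t x :=
      hPd.deriv
    rw [h1, h2] at hpde'
    have hρtval : ρt t x = -(ρx t x * v t x + ρ t x * vx t x) := by linarith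
    have hinner : ρ t x * (ρx t x / ρ t x) = ρx t x := by
      rw [← mul_div_assoc]; exact mul_div_cancel_left₀ _ (hρne t x)
    have hc : ρ t x * v t x * (ρx t x / ρ t x) = v t x * ρx t x := by
      rw [mul_comm (ρ t x) (v t x), mul_assoc, hinner]
    simp only [hg_def, hF'_def, hρtval, Real.log_div (hρne t x) hρstar_pos.ne', hc]
    ring
  -- integrate: ∫ g = Φ 1 - Φ 0 = 0
  have hg_c : Continuous g := by
    apply Continuous.sub
    · exact hF'_c.comp (continuous_const.prodMk continuous_id)
    · exact ((continuous_const.sub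
        (hRc.comp (continuous_const.prodMk continuous_id))).mul
        (hvx_c.comp (continuous_const.prodMk continuous_id)))
  have hint : (∫ x in (0:ℝ)..1, g x) = Φ 1 - Φ 0 :=
    intervalIntegral.integral_eq_sub_of_hasDerivAt
      (fun x _ => hΦderiv x) (hg_c.intervalIntegrable 0 1)
  have hΦper : Φ 1 = Φ 0 := by
    have h1 : ρ t 1 = ρ t 0 := by simpa using hρper t 0
    have h2 : v t 1 = v t 0 := by simpa using hvper t 0
    simp only [hΦ_def, h1, h2]
  have hzero : (∫ x in (0:ℝ)..1, g x) = 0 := by rw [hint, hΦper, sub_self]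
  have hsplit : (∫ x in (0:ℝ)..1, g x)
      = (∫ x in (0:ℝ)..1, F' t x) - ∫ x in (0:ℝ)..1, (ρstar - ρ t x) * vx t x := by
    apply intervalIntegral.integral_sub
    · exact (hF'_c.comp (continuous_const.prodMk continuous_id)).intervalIntegrable 0 1
    · exact ((continuous_const.sub
        (hRc.comp (continuous_const.prodMk continuous_id))).mul
        (hvx_c.comp (continuous_const.prodMk continuous_id))).intervalIntegrable 0 1
  have hfinal : (∫ x in (0:ℝ)..1, F' t x)
      = ∫ x in (0:ℝ)..1, (ρstar - ρ t x) * vx t x := by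
    have := hsplit.symm.trans hzero
    linarith [this]
  rw [hderivV, hfinal]
  apply intervalIntegral.integral_congr
  intro x _
  show (ρstar - ρ t x) * vx t x = (ρstar - ρ t x) * deriv (fun y => v t y) x
  rw [(hasDerivAt_snd v hv t x).deriv]
end
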